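/- Let G be a finite abelian group of order n, D(G) its generalized dihedral group (assumed non-abelian), \Gamma the commuting graph of D(G), and z = |{g \in G : g^2 = e}|. Then the detour diameter of \Gamma (the maximum detour eccentricity over all vertices) equals 2n - 1 if n/z \le z, and equals n + z^2 - 1 if n/z > z. -/

import Mathlib

/-- The generalized dihedral group `D(G) = G ⋊ C₂`, with `⟨g, false⟩`
representing `(g, 1)` and `⟨g, true⟩` representing `(g, -1)`.
Multiplication is `(g₁, c₁)(g₂, c₂) = (g₁ g₂^{c₁}, c₁ c₂)`, i.e. `-1` acts by inversion. -/
@[ext]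
structure GenDihedral (G : Type) where
  g : G
  b : Bool
  deriving DecidableEq

namespace GenDihedral

variable {G : Type} [CommGroup G]

instance : Mul (GenDihedral G) :=
  ⟨fun a c => ⟨a.g * (if a.b then c.g⁻¹ else c.g), xor a.b c.b⟩⟩

instance : One (GenDihedral G) := ⟨⟨1, false⟩⟩

instance : Inv (GenDihedral G) := ⟨fun a => ⟨if a.b then a.g else a.g⁻¹, a.b⟩⟩

theorem mul_def (a c : GenDihedral G) :
    a * c = ⟨a.g * (if a.b then c.g⁻¹ else c.g), xor a.b c.b⟩ := rfl

theorem one_def : (1 : GenDihedral G) = ⟨1, false⟩ := rfl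

theorem inv_def (a : GenDihedral G) : a⁻¹ = ⟨if a.b then a.g else a.g⁻¹, a.b⟩ := rfl

instance : Group (GenDihedral G) where
  mul_assoc a c d := by
    obtain ⟨g₁, b₁⟩ := a; obtain ⟨g₂, b₂⟩ := c; obtain ⟨g₃, b₃⟩ := d
    cases b₁ <;> cases b₂ <;> cases b₃ <;>
      simp [mul_def, mul_assoc, mul_comm, mul_left_comm, mul_inv, inv_inv]
  one_mul a := by obtain ⟨g, b⟩ := a; cases b <;> simp [mul_def, one_def]
  mul_one a := by obtain ⟨g, b⟩ := a; cases b <;> simp [mul_def, one_def]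
  inv_mul_cancel a := by
    obtain ⟨g, b⟩ := a; cases b <;> simp [mul_def, one_def, inv_def]

instance [Fintype G] : Fintype (GenDihedral G) :=
  Fintype.ofEquiv (G × Bool)
    ⟨fun p => ⟨p.1, p.2⟩, fun x => (x.g, x.b), fun _ => rfl, fun _ => rfl⟩

instance [DecidableEq G] (a c : GenDihedral G) : Decidable (Commute a c) :=
  decidable_of_iff (a * c = c * a) Iff.rfl

end GenDihedral

namespace GenDihedral

/-- The commuting graph of `D(G)`: vertices are the elements of `D(G)`, and two
distinct vertices are adjacent iff they commute. -/
def commGraph (G : Type) [CommGroup G] : SimpleGraph (GenDihedral G) where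
  Adj u v := u ≠ v ∧ u * v = v * u
  symm := ⟨fun _ _ h => ⟨h.1.symm, h.2.symm⟩⟩
  loopless := ⟨fun _ h => h.1 rfl⟩

instance {G : Type} [CommGroup G] [DecidableEq G] : DecidableRel (commGraph G).Adj :=
  fun u v => decidable_of_iff (u ≠ v ∧ u * v = v * u) Iff.rfl

end GenDihedral

/-- The detour eccentricity of a vertex `v` in a graph `Γ`: the maximum length of a
simple path in `Γ` starting at `v` (equivalently, the maximum over all vertices `u`
of the detour distance `d_D(v, u)`, the length of a longest simple `v-u` path). -/
noncomputable def detourEcc {V : Type} (Γ : SimpleGraph V) (v : V) : ℕ :=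
  sSup {n : ℕ | ∃ u : V, ∃ p : Γ.Walk v u, p.IsPath ∧ p.length = n}

open List Finset

namespace GenDihedral
variable {G : Type} [CommGroup G]

theorem adj_AA {a b : G} (h : a ≠ b) :
    (commGraph G).Adj ⟨a, false⟩ ⟨b, false⟩ := by
  refine ⟨by simp [h], ?_⟩
  simp [mul_def, mul_comm]

theorem adj_AR {a g : G} (h : a ^ 2 = 1) :
    (commGraph G).Adj ⟨a, false⟩ ⟨g, true⟩ := by
  refine ⟨by simp, ?_⟩
  have ha : a⁻¹ = a := by
    rw [pow_two] at h; exact inv_eq_of_mul_eq_one_right h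
  simp [mul_def, ha, mul_comm]

theorem adj_RR {a b : G} (hne : a ≠ b) (h : a ^ 2 = b ^ 2) :
    (commGraph G).Adj ⟨a, true⟩ ⟨b, true⟩ := by
  refine ⟨by simp [hne], ?_⟩
  have h2 : a * a = b * b := by rw [← pow_two, ← pow_two]; exact h
  have eq1 : (a * b⁻¹) * (b * a) = a * a := by rw [mul_assoc a b⁻¹ _, inv_mul_cancel_left]
  have eq2 : (b * a⁻¹) * (b * a) = b * b := by
    rw [mul_comm b a, mul_assoc b a⁻¹ _, inv_mul_cancel_left]
  have key : a * b⁻¹ = b * a⁻¹ := mul_right_cancel (eq1.trans (h2.trans eq2.symm))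
  simp [mul_def, key]

theorem adj_AR' {a g : G} (hadj : (commGraph G).Adj ⟨a, false⟩ ⟨g, true⟩) :
    a ^ 2 = 1 := by
  have h1 := hadj.2
  simp only [mul_def, Bool.false_xor, Bool.xor_false, if_neg Bool.false_ne_true,
    if_pos rfl, if_true, mk.injEq, and_true] at h1
  have eq1 : (a * g) * (a * g⁻¹) = a * a := by
    rw [mul_comm a g⁻¹, mul_assoc a g _, mul_inv_cancel_left]
  have eq2 : (g * a⁻¹) * (a * g⁻¹) = 1 := by
    rw [mul_assoc g a⁻¹ _, inv_mul_cancel_left, mul_inv_cancel]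
  rw [pow_two]
  exact (eq1.symm.trans (by rw [h1])).trans eq2

theorem adj_RR' {a b : G} (hadj : (commGraph G).Adj ⟨a, true⟩ ⟨b, true⟩) :
    a ^ 2 = b ^ 2 := by
  have h1 := hadj.2
  simp only [mul_def, Bool.xor_self, if_pos rfl, if_true, mk.injEq, and_true] at h1
  have eq1 : (a * b⁻¹) * (b * a) = a * a := by rw [mul_assoc a b⁻¹ _, inv_mul_cancel_left]
  have eq2 : (b * a⁻¹) * (b * a) = b * b := by
    rw [mul_comm b a, mul_assoc b a⁻¹ _, inv_mul_cancel_left]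
  rw [pow_two, pow_two]
  exact (eq1.symm.trans (by rw [h1])).trans eq2

end GenDihedral
open List

theorem exists_walk_of_chain' {V : Type} (Γ : SimpleGraph V) :
    ∀ (t : List V) (x : V), (x :: t).IsChain Γ.Adj → (x :: t).Nodup →
      ∃ (u : V) (p : Γ.Walk x u), p.IsPath ∧ p.support = x :: t := by
  intro t
  induction t with
  | nil =>
    intro x _ _
    exact ⟨x, SimpleGraph.Walk.nil, SimpleGraph.Walk.IsPath.nil, by simp⟩
  | cons y t' ih =>
    intro x hc hn
    have hadj : Γ.Adj x y := (List.isChain_cons_cons.mp hc).1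
    obtain ⟨u, p, hp, hs⟩ := ih y (List.isChain_cons_cons.mp hc).2 hn.of_cons
    refine ⟨u, SimpleGraph.Walk.cons hadj p, ?_, by simp [hs]⟩
    rw [SimpleGraph.Walk.cons_isPath_iff]
    exact ⟨hp, by rw [hs]; exact (List.nodup_cons.mp hn).1⟩

theorem iSup_detourEcc_eq {V : Type} (Γ : SimpleGraph V) (M : ℕ)
    (hub : ∀ (v u : V) (p : Γ.Walk v u), p.IsPath → p.length ≤ M)
    (hex : ∃ (v u : V) (p : Γ.Walk v u), p.IsPath ∧ p.length = M) :
    (⨆ v : V, detourEcc Γ v) = M := by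
  obtain ⟨v₀, u₀, p₀, hp₀, hl₀⟩ := hex
  have hne : Nonempty V := ⟨v₀⟩
  have hle : ∀ v, detourEcc Γ v ≤ M := fun v =>
    csSup_le ⟨0, v, SimpleGraph.Walk.nil, SimpleGraph.Walk.IsPath.nil, rfl⟩
      (by rintro x ⟨u, p, hp, rfl⟩; exact hub v u p hp)
  apply le_antisymm (ciSup_le hle)
  have h1 : M ≤ detourEcc Γ v₀ :=
    le_csSup ⟨M, by rintro x ⟨u, p, hp, rfl⟩; exact hub v₀ u p hp⟩ ⟨u₀, p₀, hp₀, hl₀⟩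
  exact h1.trans (le_ciSup (f := fun v => detourEcc Γ v)
    ⟨M, by rintro x ⟨v, rfl⟩; exact hle v⟩ v₀)
namespace GenDihedral
open Finset List

variable {G : Type} [CommGroup G] [Fintype G] [DecidableEq G]

def sqFiber (G : Type) [CommGroup G] [Fintype G] [DecidableEq G] (s : G) : Finset G :=
  Finset.univ.filter (fun g => g ^ 2 = s)

def sqImg (G : Type) [CommGroup G] [Fintype G] [DecidableEq G] : Finset G :=
  Finset.univ.image (fun g => g ^ 2)

theorem sq_of_mem_fiber {s g : G} (h : g ∈ sqFiber G s) : g ^ 2 = s :=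
  (Finset.mem_filter.mp h).2

theorem mem_fiber_of_sq {s g : G} (h : g ^ 2 = s) : g ∈ sqFiber G s :=
  Finset.mem_filter.mpr ⟨Finset.mem_univ _, h⟩

theorem card_sqFiber_le (s : G) : (sqFiber G s).card ≤ (sqFiber G 1).card := by
  rcases (sqFiber G s).eq_empty_or_nonempty with h | ⟨g₀, hg₀⟩
  · simp [h]
  · have hg₀s : g₀ ^ 2 = s := sq_of_mem_fiber hg₀
    apply Finset.card_le_card_of_injOn (fun g => g * g₀⁻¹)
    · intro g hg
      apply mem_fiber_of_sq
      rw [mul_pow, inv_pow, sq_of_mem_fiber hg, hg₀s, mul_inv_cancel]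
    · intro a _ b _ h
      exact mul_right_cancel h

theorem card_sqFiber_eq {s : G} (hs : s ∈ sqImg G) :
    (sqFiber G s).card = (sqFiber G 1).card := by
  obtain ⟨g₀, _, hg₀⟩ := Finset.mem_image.mp hs
  refine le_antisymm (card_sqFiber_le s) ?_
  apply Finset.card_le_card_of_injOn (fun g => g * g₀)
  · intro g hg
    apply mem_fiber_of_sq
    rw [mul_pow, sq_of_mem_fiber hg, hg₀, one_mul]
  · intro a _ b _ h
    exact mul_right_cancel h

theorem card_sqImg_mul :
    (sqImg G).card * (sqFiber G 1).card = Fintype.card G := by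
  have h := Finset.card_eq_sum_card_fiberwise
    (f := fun g : G => g ^ 2) (s := Finset.univ) (t := sqImg G)
    (fun x _ => Finset.mem_image_of_mem _ (Finset.mem_univ x))
  have h2 : ∀ b ∈ sqImg G,
      (Finset.univ.filter (fun a : G => (fun g => g ^ 2) a = b)).card
        = (sqFiber G 1).card := fun b hb => card_sqFiber_eq hb
  rw [← Finset.card_univ, h, Finset.sum_congr rfl h2, Finset.sum_const, smul_eq_mul]

theorem one_mem_sqFiber_one : (1 : G) ∈ sqFiber G 1 := mem_fiber_of_sq (one_pow 2)

theorem sqFiber_one_card_pos : 0 < (sqFiber G 1).card :=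
  Finset.card_pos.mpr ⟨1, one_mem_sqFiber_one⟩

noncomputable def fibL (s : G) : List G := (sqFiber G s).toList

noncomputable def body : List (G × G) → List (GenDihedral G)
  | [] => []
  | p :: rest =>
      (⟨p.1, false⟩ : GenDihedral G) :: ((fibL p.2).map (fun g => ⟨g, true⟩) ++ body rest)

theorem mem_body {L : List (G × G)} {x : GenDihedral G} (hx : x ∈ body L) :
    (x.b = false ∧ x.g ∈ L.map Prod.fst) ∨ (x.b = true ∧ x.g ^ 2 ∈ L.map Prod.snd) := by
  induction L with
  | nil => simp [body] at hx
  | cons p rest ih =>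
    simp only [body, List.mem_cons, List.mem_append] at hx
    rcases hx with rfl | hx | hx
    · exact Or.inl ⟨rfl, by simp⟩
    · obtain ⟨g, hg, rfl⟩ := List.mem_map.mp hx
      refine Or.inr ⟨rfl, ?_⟩
      have := sq_of_mem_fiber (Finset.mem_toList.mp hg)
      simp only [this]
      simp
    · rcases ih hx with ⟨h1, h2⟩ | ⟨h1, h2⟩
      · exact Or.inl ⟨h1, by simp only [List.map_cons]; exact List.mem_cons_of_mem _ h2⟩
      · exact Or.inr ⟨h1, by simp only [List.map_cons]; exact List.mem_cons_of_mem _ h2⟩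

theorem body_length {L : List (G × G)} (hss : ∀ p ∈ L, p.2 ∈ sqImg G) :
    (body L).length = L.length * (1 + (sqFiber G 1).card) := by
  induction L with
  | nil => simp [body]
  | cons p rest ih =>
    have hfib : (fibL p.2).length = (sqFiber G 1).card := by
      rw [fibL, Finset.length_toList, card_sqFiber_eq (hss p (List.mem_cons_self))]
    simp only [body, List.length_cons, List.length_append, List.length_map, hfib,
      ih (fun q hq => hss q (List.mem_cons_of_mem _ hq))]
    ring

theorem body_nodup {L : List (G × G)} (hws : (L.map Prod.fst).Nodup)
    (hss : (L.map Prod.snd).Nodup) : (body L).Nodup := by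
  induction L with
  | nil => simp [body]
  | cons p rest ih =>
    simp only [List.map_cons, List.nodup_cons] at hws hss
    rw [body, List.nodup_cons]
    constructor
    · intro hx
      rcases List.mem_append.mp hx with hx | hx
      · obtain ⟨g, _, he⟩ := List.mem_map.mp hx
        exact Bool.false_ne_true (congrArg GenDihedral.b he).symm
      · rcases mem_body hx with ⟨_, h2⟩ | ⟨h1, _⟩
        · exact hws.1 h2
        · simp at h1
    · apply List.Nodup.append
      · exact ((sqFiber G p.2).nodup_toList).map (fun a b h => by injection h)
      · exact ih hws.2 hss.2
      · intro x hx hx'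
        obtain ⟨g, hg, rfl⟩ := List.mem_map.mp hx
        rcases mem_body hx' with ⟨h1, _⟩ | ⟨_, h2⟩
        · simp at h1
        · have hgs : g ^ 2 = p.2 := sq_of_mem_fiber (Finset.mem_toList.mp hg)
          rw [hgs] at h2
          exact hss.1 h2

theorem body_chain {L : List (G × G)} (hws : ∀ p ∈ L, p.1 ^ 2 = 1)
    (hss : ∀ p ∈ L, p.2 ∈ sqImg G) :
    (body L).IsChain (commGraph G).Adj ∧
      (∀ x ∈ (body L).head?, ∃ w ∈ L.map Prod.fst, x = (⟨w, false⟩ : GenDihedral G)) := by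
  induction L with
  | nil => constructor <;> simp [body]
  | cons p rest ih =>
    have hs : p.2 ∈ sqImg G := hss p (List.mem_cons_self)
    have hw : p.1 ^ 2 = 1 := hws p (List.mem_cons_self)
    have hfibne : fibL p.2 ≠ [] := by
      obtain ⟨g₀, _, hg₀⟩ := Finset.mem_image.mp hs
      exact Finset.Nonempty.toList_ne_nil ⟨g₀, mem_fiber_of_sq hg₀⟩
    have hmapne : (fibL p.2).map (fun g => (⟨g, true⟩ : GenDihedral G)) ≠ [] := by
      simpa using hfibne
    obtain ⟨ihc, ihh⟩ := ih (fun q hq => hws q (List.mem_cons_of_mem _ hq))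
      (fun q hq => hss q (List.mem_cons_of_mem _ hq))
    constructor
    · rw [body, List.isChain_cons]
      constructor
      · intro y hy
        rw [List.head?_append_of_ne_nil _ hmapne] at hy
        obtain ⟨g, hg, rfl⟩ := List.mem_map.mp (List.mem_of_mem_head? hy)
        exact adj_AR hw
      · rw [List.isChain_append]
        refine ⟨?_, ihc, ?_⟩
        · apply List.Pairwise.isChain
          rw [List.pairwise_map]
          apply List.Pairwise.imp_of_mem ?_ ((sqFiber G p.2).nodup_toList)
          intro a b ha hb hne
          exact adj_RR hne ((sq_of_mem_fiber (Finset.mem_toList.mp ha)).trans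
            (sq_of_mem_fiber (Finset.mem_toList.mp hb)).symm)
        · intro x hx y hy
          obtain ⟨w', hw', rfl⟩ := ihh y hy
          obtain ⟨g, hg, rfl⟩ := List.mem_map.mp (List.mem_of_mem_getLast? hx)
          refine ((adj_AR ?_).symm)
          obtain ⟨q, hq, hq2⟩ := List.mem_map.mp hw'
          exact hq2 ▸ hws q (List.mem_cons_of_mem _ hq)
    · intro x hx
      rw [body] at hx
      simp only [List.head?_cons, Option.mem_def, Option.some.injEq] at hx
      exact ⟨p.1, by simp, hx.symm⟩

theorem exists_long_list (m : ℕ) (hmz : m ≤ (sqFiber G 1).card) (hmk : m ≤ (sqImg G).card) :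
    ∃ l : List (GenDihedral G), l.IsChain (commGraph G).Adj ∧ l.Nodup ∧ l ≠ [] ∧
      l.length = Fintype.card G + m * (sqFiber G 1).card := by
  classical
  set ws : List G := ((sqFiber G 1).toList).take m with hws_def
  set ss : List G := ((sqImg G).toList).take m with hss_def
  have hws_len : ws.length = m := by
    rw [hws_def, List.length_take, Finset.length_toList, min_eq_left hmz]
  have hss_len : ss.length = m := by
    rw [hss_def, List.length_take, Finset.length_toList, min_eq_left hmk]
  have hws_nodup : ws.Nodup := (List.take_sublist _ _).nodup (Finset.nodup_toList _)
  have hss_nodup : ss.Nodup := (List.take_sublist _ _).nodup (Finset.nodup_toList _)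
  have hws_mem : ∀ w ∈ ws, w ^ 2 = 1 := fun w hw =>
    sq_of_mem_fiber (Finset.mem_toList.mp ((List.take_subset _ _) hw))
  have hss_mem : ∀ s ∈ ss, s ∈ sqImg G := fun s hs =>
    Finset.mem_toList.mp ((List.take_subset _ _) hs)
  set L : List (G × G) := ws.zip ss with hL_def
  have hmap_fst : L.map Prod.fst = ws :=
    List.map_fst_zip (le_of_eq (by rw [hws_len, hss_len]))
  have hmap_snd : L.map Prod.snd = ss :=
    List.map_snd_zip (le_of_eq (by rw [hss_len, hws_len]))
  have hL_len : L.length = m := by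
    rw [hL_def, List.length_zip, hws_len, hss_len, min_self]
  have hL1 : ∀ p ∈ L, p.1 ^ 2 = 1 := fun p hp =>
    hws_mem p.1 (hmap_fst ▸ List.mem_map_of_mem (f := Prod.fst) hp)
  have hL2 : ∀ p ∈ L, p.2 ∈ sqImg G := fun p hp =>
    hss_mem p.2 (hmap_snd ▸ List.mem_map_of_mem (f := Prod.snd) hp)
  set apart : List (GenDihedral G) :=
    ((Finset.univ \ ws.toFinset).toList).map (fun a => (⟨a, false⟩ : GenDihedral G))
    with hapart_def
  have hmn : m ≤ Fintype.card G := le_trans hmz (by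
    apply Finset.card_le_card (Finset.subset_univ _) |>.trans
    rw [Finset.card_univ])
  have hlen : (apart ++ body L).length
      = Fintype.card G + m * (sqFiber G 1).card := by
    rw [List.length_append]
    have hb := body_length hL2
    rw [hL_len] at hb
    have hap : apart.length = Fintype.card G - m := by
      rw [hapart_def, List.length_map, Finset.length_toList, Finset.card_sdiff_of_subset
        (Finset.subset_univ _), Finset.card_univ, List.toFinset_card_of_nodup hws_nodup,
        hws_len]
    rw [hap, hb]
    have hz := sqFiber_one_card_pos (G := G)
    ring_nf
    omega
  refine ⟨apart ++ body L, ?_, ?_, ?_, hlen⟩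
  · rw [List.isChain_append]
    obtain ⟨bc, bh⟩ := body_chain hL1 hL2
    refine ⟨?_, bc, ?_⟩
    · apply List.Pairwise.isChain
      rw [List.pairwise_map]
      apply List.Pairwise.imp_of_mem ?_ (Finset.nodup_toList _)
      intro a b _ _ hne
      exact adj_AA hne
    · intro x hx y hy
      obtain ⟨w', hw', rfl⟩ := bh y hy
      obtain ⟨a, ha, rfl⟩ := List.mem_map.mp (List.mem_of_mem_getLast? hx)
      have hanot : a ∉ ws := by
        have := Finset.mem_sdiff.mp (Finset.mem_toList.mp ha)
        intro hmem
        exact this.2 (List.mem_toFinset.mpr hmem)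
      have hw'ws : w' ∈ ws := hmap_fst ▸ hw'
      exact adj_AA (fun he => hanot (he ▸ hw'ws))
  · apply List.Nodup.append
    · exact ((Finset.univ \ ws.toFinset).nodup_toList).map (fun a b h => by injection h)
    · exact body_nodup (hmap_fst ▸ hws_nodup) (hmap_snd ▸ hss_nodup)
    · intro x hx hx'
      obtain ⟨a, ha, rfl⟩ := List.mem_map.mp hx
      rcases mem_body hx' with ⟨_, h2⟩ | ⟨h1, _⟩
      · have := Finset.mem_sdiff.mp (Finset.mem_toList.mp ha)
        rw [hmap_fst] at h2
        exact this.2 (List.mem_toFinset.mpr h2)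
      · simp at h1
  · apply List.ne_nil_of_length_pos
    rw [hlen]
    have : 0 < Fintype.card G := Fintype.card_pos
    omega

end GenDihedral
namespace ListAux
open List

variable {α : Type*}

def cpairs : List α → List (α × α)
  | a :: b :: t => (a, b) :: cpairs (b :: t)
  | _ => []

@[simp] theorem cpairs_nil : cpairs ([] : List α) = [] := rfl
@[simp] theorem cpairs_single (a : α) : cpairs [a] = [] := rfl
@[simp] theorem cpairs_cons₂ (a b : α) (t : List α) :
    cpairs (a :: b :: t) = (a, b) :: cpairs (b :: t) := rfl

theorem map_fst_cpairs : ∀ l : List α, (cpairs l).map Prod.fst = l.dropLast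
  | [] => rfl
  | [_] => rfl
  | a :: b :: t => by
    rw [cpairs_cons₂, List.map_cons, map_fst_cpairs (b :: t), List.dropLast_cons₂]

theorem map_snd_cpairs : ∀ l : List α, (cpairs l).map Prod.snd = l.tail
  | [] => rfl
  | [_] => rfl
  | a :: b :: t => by
    rw [cpairs_cons₂, List.map_cons, map_snd_cpairs (b :: t)]
    rfl

theorem mem_cpairs_adj {R : α → α → Prop} :
    ∀ {l : List α}, l.IsChain R → ∀ p ∈ cpairs l, R p.1 p.2
  | [], _, p, hp => by simp at hp
  | [_], _, p, hp => by simp at hp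
  | a :: b :: t, hc, p, hp => by
    rcases List.mem_cons.mp hp with rfl | hp
    · exact (List.isChain_cons_cons.mp hc).1
    · exact mem_cpairs_adj (List.isChain_cons_cons.mp hc).2 p hp

theorem cpairs_append : ∀ (u t : List α) (x y : α), u.getLast? = some x →
    t.head? = some y → cpairs (u ++ t) = cpairs u ++ (x, y) :: cpairs t
  | [], t, x, y, hx, _ => by simp at hx
  | [a], b :: t, x, y, hx, hy => by
    simp only [List.getLast?_singleton, Option.some.injEq] at hx
    simp only [List.head?_cons, Option.some.injEq] at hy
    subst hx; subst hy
    simp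
  | a :: a' :: u, t, x, y, hx, hy => by
    have ht : t ≠ [] := by intro h; subst h; simp at hy
    obtain ⟨b, t', rfl⟩ := List.exists_cons_of_ne_nil ht
    have hlast : (a' :: u).getLast? = some x := by
      rwa [List.getLast?_cons_cons] at hx
    have := cpairs_append (a' :: u) (b :: t') x y hlast hy
    simp only [List.cons_append, cpairs_cons₂] at *
    rw [this]

theorem cpairs_suffix {t l : List α} (h : t <:+ l) : cpairs t <:+ cpairs l := by
  obtain ⟨s, rfl⟩ := h
  rcases List.eq_nil_or_concat s with rfl | ⟨s', a, rfl⟩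
  · simp
  · rcases t with - | ⟨b, t'⟩
    · simp
    · rw [cpairs_append (s'.concat a) (b :: t') a b (by simp) rfl]
      exact (List.suffix_cons _ _).trans (List.suffix_append _ _)

theorem snd_unique : ∀ {l : List α}, l.Nodup → ∀ {x x' y : α},
    (x, y) ∈ cpairs l → (x', y) ∈ cpairs l → x = x'
  | [], _, x, x', y, h, _ => by simp at h
  | [_], _, x, x', y, h, _ => by simp at h
  | a :: b :: t, hn, x, x', y, h, h' => by
    have hbt : b ∉ t := by
      have := (List.nodup_cons.mp (List.nodup_cons.mp hn).2).1
      simpa using this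
    have key : ∀ {u : α}, (u, y) ∈ cpairs (b :: t) → y ∈ t := by
      intro u hu
      have : y ∈ (cpairs (b :: t)).map Prod.snd := List.mem_map_of_mem (f := Prod.snd) hu
      rwa [map_snd_cpairs] at this
    rcases List.mem_cons.mp h with he | h <;> rcases List.mem_cons.mp h' with he' | h'
    · rw [(Prod.mk.injEq _ _ _ _).mp he |>.1, (Prod.mk.injEq _ _ _ _).mp he' |>.1]
    · exfalso
      have hyb : y = b := ((Prod.mk.injEq _ _ _ _).mp he).2
      exact hbt (hyb ▸ key h')
    · exfalso
      have hyb : y = b := ((Prod.mk.injEq _ _ _ _).mp he').2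
      exact hbt (hyb ▸ key h)
    · exact snd_unique (List.nodup_cons.mp hn).2 h h'

theorem exists_succ : ∀ {l : List α} {x : α}, x ∈ l → l.getLast? ≠ some x →
    ∃ w, (x, w) ∈ cpairs l
  | [], x, hx, _ => by simp at hx
  | [a], x, hx, hne => by
    simp only [List.mem_singleton] at hx
    subst hx
    exact absurd rfl hne
  | a :: b :: t, x, hx, hne => by
    rcases List.mem_cons.mp hx with rfl | hx
    · exact ⟨b, List.mem_cons_self⟩
    · have : (b :: t).getLast? ≠ some x := by
        rwa [List.getLast?_cons_cons] at hne
      obtain ⟨w, hw⟩ := exists_succ hx this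
      exact ⟨w, List.mem_cons_of_mem _ hw⟩

theorem suffix_of_mem_cpairs : ∀ {l : List α} {x y : α}, (x, y) ∈ cpairs l →
    ∃ rest, x :: y :: rest <:+ l
  | [], x, y, h => by simp at h
  | [_], x, y, h => by simp at h
  | a :: b :: t, x, y, h => by
    rcases List.mem_cons.mp h with he | h
    · obtain ⟨h1, h2⟩ := (Prod.mk.injEq _ _ _ _).mp he
      subst h1; subst h2
      exact ⟨t, List.suffix_refl _⟩
    · obtain ⟨rest, hrest⟩ := suffix_of_mem_cpairs h
      exact ⟨rest, hrest.trans (List.suffix_cons _ _)⟩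

theorem getLast?_of_suffix {t l : List α} (h : t <:+ l) (ht : t ≠ []) :
    l.getLast? = t.getLast? := by
  obtain ⟨s, rfl⟩ := h
  exact List.getLast?_append_of_ne_nil _ ht

end ListAux
set_option linter.unusedSectionVars false
namespace ListAux
open List

theorem cpairs_reverse {α : Type*} : ∀ l : List α,
    cpairs l.reverse = ((cpairs l).map Prod.swap).reverse
  | [] => rfl
  | [a] => rfl
  | a :: b :: t => by
    have hbt : ((b :: t).reverse).getLast? = some b := by
      rw [List.getLast?_reverse]; rfl
    rw [List.reverse_cons (a := a), cpairs_append ((b :: t).reverse) [a] b a hbt rfl,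
      cpairs_reverse (b :: t), cpairs_cons₂, List.map_cons, List.reverse_cons]
    rfl

end ListAux

namespace GenDihedral
open List ListAux

variable {G : Type} [CommGroup G] [Fintype G] [DecidableEq G]

theorem adj_RR'' {x y : GenDihedral G} (h : (commGraph G).Adj x y)
    (hx : x.b = true) (hy : y.b = true) : x.g ^ 2 = y.g ^ 2 := by
  obtain ⟨xg, xb⟩ := x; obtain ⟨yg, yb⟩ := y
  subst hx; subst hy
  exact adj_RR' h

theorem adj_AR'' {x y : GenDihedral G} (h : (commGraph G).Adj x y)
    (hx : x.b = false) (hy : y.b = true) : x.g ^ 2 = 1 := by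
  obtain ⟨xg, xb⟩ := x; obtain ⟨yg, yb⟩ := y
  subst hx; subst hy
  exact adj_AR' h

theorem points_le {l : List (GenDihedral G)} {S : Finset G} (hn : l.Nodup) (c : Bool)
    (hb : ∀ x ∈ l, x.b = c) (hg : ∀ x ∈ l, x.g ∈ S) : l.length ≤ S.card := by
  have hm : (l.map (fun x => x.g)).Nodup :=
    hn.map_on (fun x hx y hy hxy => GenDihedral.ext hxy ((hb x hx).trans (hb y hy).symm))
  calc l.length = (l.map (fun x => x.g)).length := (List.length_map _).symm
  _ = (l.map (fun x => x.g)).toFinset.card := (List.toFinset_card_of_nodup hm).symm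
  _ ≤ S.card := Finset.card_le_card (fun a ha => by
      obtain ⟨x, hx, rfl⟩ := List.mem_map.mp (List.mem_toFinset.mp ha)
      exact hg x hx)

def rcnt (l : List (GenDihedral G)) : ℕ := l.countP (fun x => x.b)
def fcnt (l : List (GenDihedral G)) : ℕ := l.countP (fun x => !x.b)
def arc (l : List (GenDihedral G)) : ℕ := (cpairs l).countP (fun q => !q.1.b && q.2.b)
def rac (l : List (GenDihedral G)) : ℕ := (cpairs l).countP (fun q => q.1.b && !q.2.b)

def hR : List (GenDihedral G) → ℕ
  | [] => 0
  | x :: _ => if x.b then 1 else 0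

def hL (l : List (GenDihedral G)) : ℕ :=
  match l.getLast? with
  | some x => if x.b then 1 else 0
  | none => 0

theorem len_eq : ∀ l : List (GenDihedral G), l.length = rcnt l + fcnt l
  | [] => rfl
  | x :: t => by
    simp only [List.length_cons, rcnt, fcnt, List.countP_cons]
    have := len_eq t
    rw [rcnt, fcnt] at this
    cases hxb : x.b <;> simp <;> omega

theorem fcnt_le (hn : l.Nodup) : fcnt (l : List (GenDihedral G)) ≤ Fintype.card G := by
  rw [fcnt, List.countP_eq_length_filter]
  have := points_le (S := Finset.univ) (hn.filter (fun x => !x.b)) false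
    (fun x hx => by simpa using List.of_mem_filter hx)
    (fun x _ => Finset.mem_univ _)
  rwa [Finset.card_univ] at this

theorem sameSq : ∀ {l : List (GenDihedral G)} (a : GenDihedral G),
    (a :: l).IsChain (commGraph G).Adj → (∀ x ∈ a :: l, x.b = true) →
    ∀ x ∈ l, x.g ^ 2 = a.g ^ 2 := by
  intro l
  induction l with
  | nil => intro a _ _ x hx; simp at hx
  | cons b t ih =>
    intro a hc hb x hx
    have hab : a.g ^ 2 = b.g ^ 2 :=
      adj_RR'' (List.isChain_cons_cons.mp hc).1 (hb a (by simp)) (hb b (by simp))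
    rcases List.mem_cons.mp hx with rfl | hx
    · exact hab.symm
    · exact (ih b (List.isChain_cons_cons.mp hc).2
        (fun y hy => hb y (List.mem_cons_of_mem _ hy)) x hx).trans hab.symm

theorem run_le {l : List (GenDihedral G)} (hc : l.IsChain (commGraph G).Adj)
    (hn : l.Nodup) (hb : ∀ x ∈ l, x.b = true) : l.length ≤ (sqFiber G 1).card := by
  cases l with
  | nil => simp
  | cons a t =>
    refine le_trans (points_le (S := sqFiber G (a.g ^ 2)) hn true hb ?_)
      (card_sqFiber_le _)
    intro x hx
    rcases List.mem_cons.mp hx with rfl | hx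
    · exact mem_fiber_of_sq rfl
    · exact mem_fiber_of_sq (sameSq a hc hb x hx)

theorem rcnt_le : ∀ (N : ℕ) (l : List (GenDihedral G)), l.length ≤ N →
    l.IsChain (commGraph G).Adj → l.Nodup →
    rcnt l ≤ (sqFiber G 1).card * (arc l + hR l) := by
  intro N
  induction N with
  | zero =>
    intro l hl _ _
    rw [List.eq_nil_of_length_eq_zero (Nat.le_zero.mp hl)]
    simp [rcnt]
  | succ N ih =>
    intro l hl hc hn
    cases l with
    | nil => simp [rcnt]
    | cons a t0 =>
      cases hab : a.b
      · -- head is A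
        cases t0 with
        | nil => simp [rcnt, List.countP_cons, hab]
        | cons b t' =>
          have h1 : rcnt (a :: b :: t') = rcnt (b :: t') := by
            simp [rcnt, List.countP_cons, hab]
          have harc : arc (a :: b :: t') = arc (b :: t')
              + (if (!a.b && b.b) then 1 else 0) := by
            rw [arc, arc, cpairs_cons₂, List.countP_cons]
          have iht := ih (b :: t') (by simpa using Nat.le_of_succ_le_succ hl)
            (List.isChain_cons_cons.mp hc).2 hn.of_cons
          have hhr : hR (a :: b :: t') = 0 := by simp [hR, hab]
          rw [h1, hhr, harc]
          cases hbb : b.b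
          · have : hR (b :: t') = 0 := by simp [hR, hbb]
            rw [this] at iht
            simpa [hab, hbb] using iht
          · have : hR (b :: t') = 1 := by simp [hR, hbb]
            rw [this] at iht
            simp only [hab, hbb]
            calc rcnt (b :: t') ≤ (sqFiber G 1).card * (arc (b :: t') + 1) := iht
            _ = (sqFiber G 1).card * (arc (b :: t')
                + (if (!false && true) then 1 else 0) + 0) := by norm_num
      · -- head is R: peel the maximal run
        set u := (a :: t0).takeWhile (fun x => x.b) with hu_def
        set t := (a :: t0).dropWhile (fun x => x.b) with ht_def
        have hul : u ++ t = a :: t0 := List.takeWhile_append_dropWhile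
        have hune : u = a :: t0.takeWhile (fun x => x.b) := by
          rw [hu_def, List.takeWhile_cons_of_pos (by simp [hab])]
        have hlen_u : 1 ≤ u.length := by rw [hune]; simp
        have hrun : u.length ≤ (sqFiber G 1).card :=
          run_le (hc.prefix (hul ▸ List.prefix_append u t))
            ((hul ▸ List.sublist_append_left u t).nodup hn)
            (fun x hx => List.mem_takeWhile_imp hx)
        have hrt : rcnt (a :: t0) = u.length + rcnt t := by
          rw [← hul, rcnt, List.countP_append]
          have : u.countP (fun x => x.b) = u.length :=
            List.countP_eq_length.mpr (fun x hx => List.mem_takeWhile_imp hx)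
          rw [this]; rfl
        have htsuf : t <:+ a :: t0 := ht_def ▸ List.dropWhile_suffix _
        have hct : t.IsChain (commGraph G).Adj := hc.suffix htsuf
        have hnt : t.Nodup := htsuf.sublist.nodup hn
        have hlt : t.length ≤ N := by
          have := congrArg List.length hul
          rw [List.length_append] at this
          simp only [List.length_cons] at this hl
          omega
        have iht := ih t hlt hct hnt
        have hhrt : hR t = 0 := by
          rcases htt : t with - | ⟨c, t'⟩
          · simp [hR]
          · have h := List.head?_dropWhile_not (fun x : GenDihedral G => x.b) (a :: t0)
            rw [← ht_def, htt] at h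
            simp only [List.head?_cons] at h
            simp [hR, h]
        have harc : arc t ≤ arc (a :: t0) :=
          List.Sublist.countP_le ((cpairs_suffix htsuf).sublist)
        have hhrl : hR (a :: t0) = 1 := by simp [hR, hab]
        rw [hrt, hhrl, Nat.mul_add, Nat.mul_one]
        rw [hhrt, Nat.add_zero] at iht
        have hmul := Nat.mul_le_mul_left (sqFiber G 1).card harc
        omega

theorem arc_le {l : List (GenDihedral G)} (hc : l.IsChain (commGraph G).Adj)
    (hn : l.Nodup) : arc l ≤ (sqFiber G 1).card := by
  rw [arc, List.countP_eq_length_filter, ← List.length_map Prod.fst]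
  have hsub : (((cpairs l).filter (fun q => !q.1.b && q.2.b)).map Prod.fst) <+ l := by
    refine List.Sublist.trans ?_ (List.dropLast_sublist l)
    rw [← map_fst_cpairs l]
    exact ((cpairs l).filter_sublist).map Prod.fst
  refine points_le (hsub.nodup hn) false ?_ ?_
  · intro x hx
    obtain ⟨q, hq, rfl⟩ := List.mem_map.mp hx
    have := List.of_mem_filter hq
    simp only [Bool.and_eq_true, Bool.not_eq_true'] at this
    exact this.1
  · intro x hx
    obtain ⟨q, hq, rfl⟩ := List.mem_map.mp hx
    have hmem := List.mem_of_mem_filter hq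
    have hφ := List.of_mem_filter hq
    simp only [Bool.and_eq_true, Bool.not_eq_true'] at hφ
    exact mem_fiber_of_sq (adj_AR'' (mem_cpairs_adj hc q hmem) hφ.1 hφ.2)

theorem rac_le {l : List (GenDihedral G)} (hc : l.IsChain (commGraph G).Adj)
    (hn : l.Nodup) : rac l ≤ (sqFiber G 1).card := by
  rw [rac, List.countP_eq_length_filter, ← List.length_map Prod.snd]
  have hsub : (((cpairs l).filter (fun q => q.1.b && !q.2.b)).map Prod.snd) <+ l := by
    refine List.Sublist.trans ?_ (List.tail_sublist l)
    rw [← map_snd_cpairs l]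
    exact ((cpairs l).filter_sublist).map Prod.snd
  refine points_le (hsub.nodup hn) false ?_ ?_
  · intro x hx
    obtain ⟨q, hq, rfl⟩ := List.mem_map.mp hx
    have := List.of_mem_filter hq
    simp only [Bool.and_eq_true, Bool.not_eq_true'] at this
    exact this.2
  · intro x hx
    obtain ⟨q, hq, rfl⟩ := List.mem_map.mp hx
    have hmem := List.mem_of_mem_filter hq
    have hφ := List.of_mem_filter hq
    simp only [Bool.and_eq_true, Bool.not_eq_true'] at hφ
    exact mem_fiber_of_sq
      (adj_AR'' (mem_cpairs_adj hc q hmem).symm hφ.2 hφ.1)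

theorem hR_eq (l : List (GenDihedral G)) :
    hR l = match l.head? with
      | some x => if x.b then 1 else 0
      | none => 0 := by
  cases l <;> rfl

theorem rcnt_le' (l : List (GenDihedral G))
    (hc : l.IsChain (commGraph G).Adj) (hn : l.Nodup) :
    rcnt l ≤ (sqFiber G 1).card * (rac l + hL l) := by
  have hcr : l.reverse.IsChain (commGraph G).Adj := by
    rw [List.isChain_reverse]
    exact hc.imp (fun a b h => h.symm)
  have h := rcnt_le l.reverse.length l.reverse le_rfl hcr (List.nodup_reverse.mpr hn)
  have h1 : rcnt l.reverse = rcnt l := by rw [rcnt, rcnt]; simp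
  have h2 : arc l.reverse = rac l := by
    have heq : ((fun q : (GenDihedral G × GenDihedral G) => !q.1.b && q.2.b) ∘ Prod.swap)
        = (fun q : (GenDihedral G × GenDihedral G) => q.1.b && !q.2.b) := by
      funext q
      simp [Bool.and_comm]
    rw [arc, cpairs_reverse, List.countP_reverse, List.countP_map, heq, rac]
  have h3 : hR l.reverse = hL l := by
    rw [hR_eq, List.head?_reverse, hL]
  rwa [h1, h2, h3] at h

end GenDihedral
namespace GenDihedral
open List ListAux

variable {G : Type} [CommGroup G] [Fintype G] [DecidableEq G]

theorem hR_le_one (l : List (GenDihedral G)) : hR l ≤ 1 := by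
  cases l with
  | nil => simp [hR]
  | cons a t => rw [hR]; split <;> simp

theorem hL_le_one (l : List (GenDihedral G)) : hL l ≤ 1 := by
  unfold hL
  cases h : l.getLast? with
  | none => simp
  | some x =>
    by_cases hb : x.b = true
    · simp [hb]
    · simp [hb]

theorem noAA {l : List (GenDihedral G)} (hc : l.IsChain (commGraph G).Adj) (hn : l.Nodup)
    (hlast : ∀ x ∈ l.getLast?, x.b = true)
    (hZ : ∀ g : G, g ^ 2 = 1 →
      ∃ x, (x, (⟨g, false⟩ : GenDihedral G)) ∈ cpairs l ∧ x.b = true) :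
    ∀ x y : GenDihedral G, (x, y) ∈ cpairs l → x.b = false → y.b = false → False := by
  suffices key : ∀ (N : ℕ) (x y : GenDihedral G) (rest : List (GenDihedral G)),
      (x :: y :: rest).length ≤ N → (x :: y :: rest) <:+ l →
      x.b = false → y.b = false → False by
    intro x y hmem hx hy
    obtain ⟨rest, hsuf⟩ := suffix_of_mem_cpairs hmem
    exact key (x :: y :: rest).length x y rest le_rfl hsuf hx hy
  intro N
  induction N with
  | zero => intro x y rest h _ _ _; simp at h
  | succ N ih =>
    intro x y rest hlen hsuf hx hy
    cases rest with
    | nil =>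
      have h1 : l.getLast? = some y := by
        rw [getLast?_of_suffix hsuf (by simp)]; rfl
      have := hlast y (by rw [h1]; rfl)
      rw [hy] at this
      exact Bool.false_ne_true this
    | cons w rest' =>
      have hsuf2 : (y :: w :: rest') <:+ l := (List.suffix_cons x _).trans hsuf
      have hyw : (y, w) ∈ cpairs l :=
        (cpairs_suffix hsuf2).sublist.subset (by simp)
      cases hw : w.b
      · exact ih y w rest' (by simpa using Nat.le_of_succ_le_succ hlen) hsuf2 hy hw
      · have hadj := mem_cpairs_adj hc (y, w) hyw
        have hy2 : y.g ^ 2 = 1 := adj_AR'' hadj hy hw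
        obtain ⟨x', hx'mem, hx'b⟩ := hZ y.g hy2
        have hyeq : (⟨y.g, false⟩ : GenDihedral G) = y := GenDihedral.ext rfl hy.symm
        rw [hyeq] at hx'mem
        have hxy : (x, y) ∈ cpairs l :=
          (cpairs_suffix hsuf).sublist.subset (by simp)
        have hxx' := snd_unique hn hxy hx'mem
        rw [hxx', hx'b] at hx
        simp at hx

theorem fcnt_le_arc {l : List (GenDihedral G)} (hc : l.IsChain (commGraph G).Adj)
    (hn : l.Nodup) (hlast : ∀ x ∈ l.getLast?, x.b = true)
    (hno : ∀ x y : GenDihedral G, (x, y) ∈ cpairs l →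
      x.b = false → y.b = false → False) :
    fcnt l ≤ arc l := by
  set arF := ((cpairs l).filter (fun q => !q.1.b && q.2.b)).map Prod.fst with harF
  have hlen : arF.length = arc l := by
    rw [harF, List.length_map, arc, List.countP_eq_length_filter]
  have hsub : arF <+ l := by
    refine List.Sublist.trans ?_ (List.dropLast_sublist l)
    rw [harF, ← map_fst_cpairs l]
    exact ((cpairs l).filter_sublist).map Prod.fst
  have hnodup : arF.Nodup := hsub.nodup hn
  have hmem : ∀ x ∈ l, x.b = false → x ∈ arF := by
    intro x hxl hxb
    have hxlast : l.getLast? ≠ some x := by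
      intro h
      have := hlast x (by rw [h]; rfl)
      rw [hxb] at this
      exact Bool.false_ne_true this
    obtain ⟨w, hw⟩ := exists_succ hxl hxlast
    cases hwb : w.b
    · exact (hno x w hw hxb hwb).elim
    · exact List.mem_map.mpr ⟨(x, w), List.mem_filter.mpr ⟨hw, by simp [hxb, hwb]⟩, rfl⟩
  rw [fcnt, List.countP_eq_length_filter, ← hlen]
  have hfn : (l.filter (fun x => !x.b)).Nodup := hn.filter _
  calc (l.filter fun x => !x.b).length
      = (l.filter fun x => !x.b).toFinset.card := (List.toFinset_card_of_nodup hfn).symm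
  _ ≤ arF.toFinset.card := Finset.card_le_card (fun a ha => by
      have hmem' := List.mem_toFinset.mp ha
      have hal : a ∈ l := List.mem_of_mem_filter hmem'
      have hab : a.b = false := by simpa using List.of_mem_filter hmem'
      exact List.mem_toFinset.mpr (hmem a hal hab))
  _ = arF.length := List.toFinset_card_of_nodup hnodup

theorem main_ub (hzn : (sqFiber G 1).card * (sqFiber G 1).card < Fintype.card G)
    {l : List (GenDihedral G)} (hc : l.IsChain (commGraph G).Adj) (hn : l.Nodup) :
    l.length ≤ Fintype.card G + (sqFiber G 1).card * (sqFiber G 1).card := by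
  by_contra hcon
  push_neg at hcon
  have hsplit := len_eq l
  have hf : fcnt l ≤ Fintype.card G := fcnt_le hn
  have hr1 := rcnt_le l.length l le_rfl hc hn
  have hr2 := rcnt_le' l hc hn
  have harc := arc_le hc hn
  have hrac := rac_le hc hn
  have hrcnt : (sqFiber G 1).card * (sqFiber G 1).card + 1 ≤ rcnt l := by omega
  have hL1 : hL l = 1 := by
    rcases Nat.lt_or_ge (hL l) 1 with h | h
    · exfalso
      have h0 : hL l = 0 := by omega
      rw [h0, Nat.add_zero] at hr2
      have := Nat.mul_le_mul_left (sqFiber G 1).card hrac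
      omega
    · exact le_antisymm (hL_le_one l) h
  have hlast : ∀ x ∈ l.getLast?, x.b = true := by
    intro x hx
    have hgl : l.getLast? = some x := Option.mem_def.mp hx
    by_contra hxb
    have hxb' : x.b = false := by simpa using hxb
    have h0 : hL l = 0 := by unfold hL; rw [hgl]; simp [hxb']
    omega
  have hrac_z : rac l = (sqFiber G 1).card := by
    refine le_antisymm hrac ?_
    by_contra h
    push_neg at h
    have h1 : rac l + 1 ≤ (sqFiber G 1).card := by omega
    have h2 := Nat.mul_le_mul_left (sqFiber G 1).card h1
    rw [hL1] at hr2
    omega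
  set raS := ((cpairs l).filter (fun q => q.1.b && !q.2.b)).map Prod.snd with hraS
  have hsubS : raS <+ l := by
    refine List.Sublist.trans ?_ (List.tail_sublist l)
    rw [hraS, ← map_snd_cpairs l]
    exact ((cpairs l).filter_sublist).map Prod.snd
  have hndS : raS.Nodup := hsubS.nodup hn
  have hbS : ∀ x ∈ raS, x.b = false := by
    intro x hx
    obtain ⟨q, hq, rfl⟩ := List.mem_map.mp hx
    have := List.of_mem_filter hq
    simp only [Bool.and_eq_true, Bool.not_eq_true'] at this
    exact this.2
  have hgS : ∀ x ∈ raS, x.g ∈ sqFiber G 1 := by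
    intro x hx
    obtain ⟨q, hq, rfl⟩ := List.mem_map.mp hx
    have hmemq := List.mem_of_mem_filter hq
    have hφ := List.of_mem_filter hq
    simp only [Bool.and_eq_true, Bool.not_eq_true'] at hφ
    exact mem_fiber_of_sq (adj_AR'' (mem_cpairs_adj hc q hmemq).symm hφ.2 hφ.1)
  have hndSg : (raS.map (fun x => x.g)).Nodup :=
    hndS.map_on (fun x hx y hy hxy =>
      GenDihedral.ext hxy ((hbS x hx).trans (hbS y hy).symm))
  have hlenS : raS.length = (sqFiber G 1).card := by
    rw [hraS, List.length_map, ← List.countP_eq_length_filter, ← rac, hrac_z]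
  have hset : (raS.map (fun x => x.g)).toFinset = sqFiber G 1 := by
    refine Finset.eq_of_subset_of_card_le ?_ ?_
    · intro a ha
      obtain ⟨x, hx, rfl⟩ := List.mem_map.mp (List.mem_toFinset.mp ha)
      exact hgS x hx
    · rw [List.toFinset_card_of_nodup hndSg, List.length_map, hlenS]
  have hZ : ∀ g : G, g ^ 2 = 1 →
      ∃ x, (x, (⟨g, false⟩ : GenDihedral G)) ∈ cpairs l ∧ x.b = true := by
    intro g hg
    have hmem0 : g ∈ (raS.map (fun x => x.g)).toFinset := hset ▸ mem_fiber_of_sq hg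
    obtain ⟨y, hy, hyg⟩ := List.mem_map.mp (List.mem_toFinset.mp hmem0)
    obtain ⟨q, hq, hq2⟩ := List.mem_map.mp hy
    have hφ := List.of_mem_filter hq
    simp only [Bool.and_eq_true, Bool.not_eq_true'] at hφ
    have hyeq : y = (⟨g, false⟩ : GenDihedral G) :=
      GenDihedral.ext hyg (hbS y hy)
    have hqeq : q = (q.1, y) := by rw [← hq2]
    refine ⟨q.1, ?_, hφ.1⟩
    rw [← hyeq, ← hqeq]
    exact List.mem_of_mem_filter hq
  have hno := noAA hc hn hlast hZ
  have hfa : fcnt l ≤ arc l := fcnt_le_arc hc hn hlast hno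
  have h2z : 2 * (sqFiber G 1).card
      ≤ (sqFiber G 1).card * (sqFiber G 1).card + 1 := by nlinarith
  have hhRle : hR l ≤ 1 := hR_le_one l
  have h1 : arc l + hR l ≤ (sqFiber G 1).card + 1 := by omega
  have h2 := Nat.mul_le_mul_left (sqFiber G 1).card h1
  have hzz1 : (sqFiber G 1).card * ((sqFiber G 1).card + 1)
      = (sqFiber G 1).card * (sqFiber G 1).card + (sqFiber G 1).card := by ring
  omega

end GenDihedral

open GenDihedral in
/-- The detour diameter (maximum detour eccentricity) of the commuting graph of a
non-abelian `D(G)` equals `2n - 1` if `n/z ≤ z`, and `n + z² - 1` if `n/z > z`,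
where `n = |G|` and `z = |{g : g² = e}|`. -/
theorem stmt13 {G : Type} [CommGroup G] [Fintype G] [DecidableEq G]
    (hna : ∃ g : G, g ^ 2 ≠ 1) (n z : ℕ) (hn : n = Fintype.card G)
    (hz : z = (Finset.univ.filter fun g : G => g ^ 2 = 1).card) :
    (⨆ v : GenDihedral G, detourEcc (commGraph G) v) =
      if n / z ≤ z then 2 * n - 1 else n + z ^ 2 - 1 := by
  classical
  have hzz : z = (sqFiber G 1).card := hz
  have hnn : n = Fintype.card G := hn
  set k := (sqImg G).card with hk_def
  have hkz : k * z = n := by rw [hzz, hnn, hk_def]; exact card_sqImg_mul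
  have hzpos : 0 < z := hzz ▸ sqFiber_one_card_pos
  have hnpos : 0 < n := hnn ▸ Fintype.card_pos
  have hdiv : n / z = k := by rw [← hkz]; exact Nat.mul_div_cancel _ hzpos
  set m := min k z with hm_def
  have hm1 : m ≤ (sqFiber G 1).card := hzz ▸ min_le_right k z
  have hm2 : m ≤ (sqImg G).card := min_le_left k z
  obtain ⟨l, hlc, hln, hlne, hll⟩ := exists_long_list m hm1 hm2
  obtain ⟨x, t, rfl⟩ := List.exists_cons_of_ne_nil hlne
  obtain ⟨u, p, hp, hps⟩ := exists_walk_of_chain' (commGraph G) t x hlc hln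
  have hplen : p.length + 1 = n + m * z := by
    have h1 := congrArg List.length hps
    rw [SimpleGraph.Walk.length_support] at h1
    rw [h1, hll, hnn, hzz]
  have hMeq : p.length = n + m * z - 1 := by omega
  have hub : ∀ (v u' : GenDihedral G) (q : (commGraph G).Walk v u'), q.IsPath →
      q.length ≤ n + m * z - 1 := by
    intro v u' q hq
    have hchain := q.isChain_adj_support
    have hnd := hq.support_nodup
    have hlen : q.support.length = q.length + 1 := SimpleGraph.Walk.length_support q
    rcases le_or_gt k z with hk | hk
    · have hcard : q.support.length ≤ Fintype.card (GenDihedral G) := hnd.length_le_card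
      have hcard2 : Fintype.card (GenDihedral G) = 2 * n := by
        rw [Fintype.card_congr
          (⟨fun x => (x.g, x.b), fun p => ⟨p.1, p.2⟩, fun _ => rfl, fun _ => rfl⟩ :
            GenDihedral G ≃ G × Bool)]
        rw [Fintype.card_prod, Fintype.card_bool, ← hnn]
        ring
      have hmk : m = k := min_eq_left hk
      have hmzn : m * z = n := by rw [hmk, hkz]
      omega
    · have hmz' : m = z := min_eq_right hk.le
      have hzkz : z * z < k * z := (Nat.mul_lt_mul_right hzpos).mpr hk
      have hzn : (sqFiber G 1).card * (sqFiber G 1).card < Fintype.card G := by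
        rw [← hzz, ← hnn, ← hkz]
        exact hzkz
      have hmain := main_ub hzn hchain hnd
      rw [← hzz, ← hnn] at hmain
      have hmzz : m * z = z * z := by rw [hmz']
      omega
  have hiSup := iSup_detourEcc_eq (commGraph G) (n + m * z - 1) hub ⟨x, u, p, hp, hMeq⟩
  rw [hiSup, hdiv, pow_two]
  by_cases hkz' : k ≤ z
  · rw [if_pos hkz']
    have hmm : m = k := min_eq_left hkz'
    have hmzn : m * z = n := by rw [hmm, hkz]
    omega
  · rw [if_neg hkz']
    have hmm : m = z := min_eq_right (le_of_not_ge hkz')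
    have hmzz : m * z = z * z := by rw [hmm]
    omega
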